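/- The ideal equation of state satisfies the admissibility conditions: for every Γ ∈ (1,2], the function h(p,ρ) = 1 + Γp/((Γ−1)ρ) on (0,∞)×(0,∞) satisfies, for all p, ρ > 0: (heq1) h(p,ρ) ≥ √(1 + p²/ρ²) + p/ρ, and (heq2) h(p,ρ)·(1/ρ − ∂h/∂p(p,ρ)) < ∂h/∂ρ(p,ρ) < 0. -/

import Mathlib

noncomputable section

/-- The ideal EOS `h(p,ρ) = 1 + Γp/((Γ-1)ρ)`. -/
def hIdeal (Γ p ρ : ℝ) : ℝ := 1 + Γ * p / ((Γ - 1) * ρ)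

lemma hIdeal_deriv_p (Γ p ρ : ℝ) (hρ : ρ ≠ 0) (hΓ : Γ - 1 ≠ 0) :
    deriv (fun p' => hIdeal Γ p' ρ) p = Γ / ((Γ - 1) * ρ) := by
  have : HasDerivAt (fun p' => hIdeal Γ p' ρ) (Γ / ((Γ - 1) * ρ)) p := by
    have h1 : HasDerivAt (fun p' : ℝ => Γ * p' / ((Γ - 1) * ρ)) (Γ * 1 / ((Γ - 1) * ρ)) p :=
      ((hasDerivAt_id p).const_mul Γ).div_const _
    simpa [hIdeal, mul_one] using h1.const_add 1
  exact this.deriv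

lemma hIdeal_deriv_ρ (Γ p ρ : ℝ) (hρ : ρ ≠ 0) :
    deriv (fun ρ' => hIdeal Γ p ρ') ρ = -(Γ * p / (Γ - 1)) / ρ ^ 2 := by
  have : HasDerivAt (fun ρ' => hIdeal Γ p ρ') (-(Γ * p / (Γ - 1)) / ρ ^ 2) ρ := by
    have h1 : HasDerivAt (fun ρ' : ℝ => ρ'⁻¹) (-(ρ ^ 2)⁻¹) ρ := hasDerivAt_inv hρ
    have h2 := (h1.const_mul (Γ * p / (Γ - 1))).const_add 1
    have heq : (fun ρ' : ℝ => 1 + Γ * p / (Γ - 1) * ρ'⁻¹) = fun ρ' => hIdeal Γ p ρ' := by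
      funext x
      rw [hIdeal, ← div_eq_mul_inv, div_div]
    rw [heq] at h2
    refine h2.congr_deriv ?_
    ring
  exact this.deriv

/-- The ideal EOS satisfies (heq1) and (heq2). -/
theorem idealEOS_admissible (Γ : ℝ) (hΓ1 : 1 < Γ) (hΓ2 : Γ ≤ 2)
    (p ρ : ℝ) (hp : 0 < p) (hρ : 0 < ρ) :
    Real.sqrt (1 + p ^ 2 / ρ ^ 2) + p / ρ ≤ hIdeal Γ p ρ ∧
    hIdeal Γ p ρ * (1 / ρ - deriv (fun p' => hIdeal Γ p' ρ) p)
        < deriv (fun ρ' => hIdeal Γ p ρ') ρ ∧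
    deriv (fun ρ' => hIdeal Γ p ρ') ρ < 0 := by
  have hΓ0 : (0:ℝ) < Γ - 1 := by linarith
  have hΓ0' : Γ - 1 ≠ 0 := ne_of_gt hΓ0
  have hρ' : ρ ≠ 0 := ne_of_gt hρ
  have hΓpos : 0 < Γ := by linarith
  refine ⟨?_, ?_, ?_⟩
  · -- heq1
    have hx : 0 < p / ρ := div_pos hp hρ
    have hsqrt : Real.sqrt (1 + p ^ 2 / ρ ^ 2) ≤ 1 + p / ρ := by
      rw [show (1 : ℝ) + p ^ 2 / ρ ^ 2 = 1 + (p / ρ) ^ 2 by rw [div_pow]]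
      have h1 : (1 + (p/ρ)^2 : ℝ) ≤ (1 + p/ρ)^2 := by nlinarith
      calc Real.sqrt (1 + (p/ρ)^2) ≤ Real.sqrt ((1 + p/ρ)^2) := Real.sqrt_le_sqrt h1
        _ = 1 + p/ρ := Real.sqrt_sq (by positivity)
    have key : 1 + p / ρ + p / ρ ≤ hIdeal Γ p ρ := by
      rw [hIdeal]
      have : 2 * (p / ρ) ≤ Γ / (Γ - 1) * (p / ρ) := by
        apply mul_le_mul_of_nonneg_right _ (le_of_lt hx)
        rw [le_div_iff₀ hΓ0]; linarith
      have heq : Γ * p / ((Γ - 1) * ρ) = Γ / (Γ - 1) * (p / ρ) := by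
        field_simp
      rw [heq]; linarith
    linarith
  · -- heq2 left
    rw [hIdeal_deriv_p Γ p ρ hρ' hΓ0', hIdeal_deriv_ρ Γ p ρ hρ']
    rw [hIdeal, ← sub_pos]
    have heq : -(Γ * p / (Γ - 1)) / ρ ^ 2
        - (1 + Γ * p / ((Γ - 1) * ρ)) * (1 / ρ - Γ / ((Γ - 1) * ρ))
        = (1 + Γ * p * (2 - Γ) / ((Γ - 1) * ρ)) / ((Γ - 1) * ρ) := by
      field_simp
      ring
    rw [heq]
    apply div_pos _ (by positivity)
    have h2 : 0 ≤ Γ * p * (2 - Γ) / ((Γ - 1) * ρ) :=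
      div_nonneg (mul_nonneg (by positivity) (by linarith)) (by positivity)
    linarith
  · rw [hIdeal_deriv_ρ Γ p ρ hρ']
    apply div_neg_of_neg_of_pos
    · simp only [neg_neg, neg_lt_zero]
      positivity
    · positivity
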